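/- arXiv:2302.02056 — 4 statements merged into one kernel-verified Lean document; each statement's English description precedes it below -/
import Mathlib

section
/- Let M^{xor}_ε denote the mechanism applying F_{1/2, 1/(2e^ε)} independently to each bit of a vector. Then for all x, y ∈ {0,1}, M^{xor}_{ε₁}(x) ⊕ M^{xor}_{ε₂}(y) has the same distribution as M^{xor}_{ε*}(x ∨ y), where ε* = −log(e^{−ε₁} + e^{−ε₂} − e^{−(ε₁+ε₂)}). -/
open Real

/-- Bernoulli distribution on `Bool` with success probability `p`. -/
def bern (p : ℝ) : Bool → ℝ := fun b => if b then p else 1 - p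

/-- Distribution of `op X Y` for independent `X ~ Bernoulli p`, `Y ~ Bernoulli q`. -/
def indepOp (p q : ℝ) (op : Bool → Bool → Bool) : Bool → ℝ :=
  fun b => ∑ x : Bool, ∑ y : Bool, if op x y = b then bern p x * bern q y else 0

/-- Output probability of a one-bit application of `M^xor_ε = F_{1/2, 1/(2e^ε)}` on input `x`:
the probability the output bit is 1. -/
noncomputable def mxorParam (ε : ℝ) (x : Bool) : ℝ :=
  if x then 1 / 2 else 1 / (2 * Real.exp ε)

set_option maxHeartbeats 800000 in
theorem stmt4 (ε₁ ε₂ : ℝ) (h₁ : 0 < ε₁) (h₂ : 0 < ε₂) (x y : Bool) :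
    indepOp (mxorParam ε₁ x) (mxorParam ε₂ y) xor =
      bern (mxorParam
        (-Real.log (Real.exp (-ε₁) + Real.exp (-ε₂) - Real.exp (-(ε₁ + ε₂)))) (x || y)) := by
  have hs : 0 < Real.exp (-ε₁) + Real.exp (-ε₂) - Real.exp (-(ε₁ + ε₂)) := by
    have h : Real.exp (-(ε₁ + ε₂)) < Real.exp (-ε₁) := by
      apply Real.exp_lt_exp.2; linarith
    have := Real.exp_pos (-ε₂)
    linarith
  have hlog : Real.exp (-(-Real.log (Real.exp (-ε₁) + Real.exp (-ε₂) - Real.exp (-(ε₁ + ε₂)))))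
      = Real.exp (-ε₁) + Real.exp (-ε₂) - Real.exp (-(ε₁ + ε₂)) := by
    rw [neg_neg, Real.exp_log hs]
  have h1 : Real.exp ε₁ ≠ 0 := (Real.exp_pos _).ne'
  have h2 : Real.exp ε₂ ≠ 0 := (Real.exp_pos _).ne'
  have hmul : Real.exp ε₁ * Real.exp ε₂ = Real.exp (ε₁ + ε₂) := (Real.exp_add _ _).symm
  have hm : Real.exp (-ε₂ + -ε₁) * (Real.exp ε₁ * Real.exp ε₂) = 1 := by
    rw [← Real.exp_add, ← Real.exp_add]; ring_nf; exact Real.exp_zero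
  funext b
  cases x <;> cases y <;> cases b <;>
    simp [indepOp, bern, mxorParam, Real.exp_neg] at hlog ⊢ <;>
    field_simp at hlog ⊢ <;>
    nlinarith [hm, Real.exp_pos ε₁, Real.exp_pos ε₂, Real.exp_pos (ε₁+ε₂),
      Real.exp_pos (Real.log (Real.exp (-ε₁) + Real.exp (-ε₂) - Real.exp (-(ε₁ + ε₂))))]
end

section
/- With the notation of the deterministic-merge theorem, it is impossible to have deterministic symmetric operations ∘ and • on {0,1}² such that simultaneously f₁(x) ∘ f₂(y) ≈ f₃(x ∨ y) and f₁(x) • f₂(y) ≈ f₃'(x ∧ y) in distribution for all x, y, where f₁, f₂ are finitely-DP randomized responses with f_i(0) ≠ f_i(1) in distribution (and likewise for f₃, f₃'). -/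
open Real

/-- One-bit output probability of `F_{p,q}` on input `x` (probability of outputting 1). -/
def rrParam (p q : ℝ) (x : Bool) : ℝ := if x then p else q

set_option maxHeartbeats 2000000 in
/-- From an or-merge, the first input parameter `p₁` is forced to be `1/2`
(in most cases of the op-table the hypotheses are outright contradictory). -/
lemma or_half_aux (p₁ q₁ p₂ q₂ p₃ q₃ : ℝ)
    (hp₁ : p₁ ∈ Set.Ioo (0 : ℝ) 1) (hq₁ : q₁ ∈ Set.Ioo (0 : ℝ) 1)
    (hp₂ : p₂ ∈ Set.Ioo (0 : ℝ) 1) (hq₂ : q₂ ∈ Set.Ioo (0 : ℝ) 1)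
    (hp₃ : p₃ ∈ Set.Ioo (0 : ℝ) 1) (hq₃ : q₃ ∈ Set.Ioo (0 : ℝ) 1)
    (hne₁ : p₁ ≠ q₁) (hne₂ : p₂ ≠ q₂) (hne₃ : p₃ ≠ q₃)
    (op : Bool → Bool → Bool)
    (hor : ∀ x y : Bool,
      indepOp (rrParam p₁ q₁ x) (rrParam p₂ q₂ y) op = bern (rrParam p₃ q₃ (x || y))) :
    p₁ = 1/2 := by
  have hTT := congrFun (hor true true) true
  have hTF := congrFun (hor true false) true
  have hFT := congrFun (hor false true) true
  have hFF := congrFun (hor false false) true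
  simp only [indepOp, bern, rrParam, Fintype.sum_bool, Bool.or_self, Bool.or_true,
    Bool.true_or, Bool.or_false, Bool.false_or, if_true, if_false] at hTT hTF hFT hFF
  obtain ⟨a1, b1⟩ := hp₁; obtain ⟨a2, b2⟩ := hq₁
  obtain ⟨a3, b3⟩ := hp₂; obtain ⟨a4, b4⟩ := hq₂
  obtain ⟨a5, b5⟩ := hp₃; obtain ⟨a6, b6⟩ := hq₃
  have h1 : 0 < p₁ - q₁ ∨ 0 < q₁ - p₁ := by
    rcases hne₁.lt_or_gt with h | h
    · exact Or.inr (by linarith)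
    · exact Or.inl (by linarith)
  have h2 : 0 < p₂ - q₂ ∨ 0 < q₂ - p₂ := by
    rcases hne₂.lt_or_gt with h | h
    · exact Or.inr (by linarith)
    · exact Or.inl (by linarith)
  clear hor hne₁ hne₂ hne₃ b2 a4 b4 a6 b6
  cases htt : op true true <;> cases htf : op true false <;>
    cases hft : op false true <;> cases hff : op false false <;>
    simp only [htt, htf, hft, hff, Bool.false_eq_true, if_true, if_false, reduceIte]
      at hTT hTF hFT hFF <;>
    rcases h1 with h1 | h1 <;> rcases h2 with h2 | h2 <;>
    first
      | linarith
      | nlinarith [mul_pos h1 h2, mul_pos a1 h2, mul_pos (sub_pos.mpr b1) h2]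

theorem stmt6 (p₁ q₁ p₂ q₂ p₃ q₃ p₄ q₄ : ℝ)
    (hp₁ : p₁ ∈ Set.Ioo (0 : ℝ) 1) (hq₁ : q₁ ∈ Set.Ioo (0 : ℝ) 1)
    (hp₂ : p₂ ∈ Set.Ioo (0 : ℝ) 1) (hq₂ : q₂ ∈ Set.Ioo (0 : ℝ) 1)
    (hp₃ : p₃ ∈ Set.Ioo (0 : ℝ) 1) (hq₃ : q₃ ∈ Set.Ioo (0 : ℝ) 1)
    (hp₄ : p₄ ∈ Set.Ioo (0 : ℝ) 1) (hq₄ : q₄ ∈ Set.Ioo (0 : ℝ) 1)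
    (hne₁ : p₁ ≠ q₁) (hne₂ : p₂ ≠ q₂) (hne₃ : p₃ ≠ q₃) (hne₄ : p₄ ≠ q₄)
    (op bop : Bool → Bool → Bool)
    (hsym : ∀ a b, op a b = op b a) (hsym' : ∀ a b, bop a b = bop b a)
    (hor : ∀ x y : Bool,
      indepOp (rrParam p₁ q₁ x) (rrParam p₂ q₂ y) op = bern (rrParam p₃ q₃ (x || y)))
    (hand : ∀ x y : Bool,
      indepOp (rrParam p₁ q₁ x) (rrParam p₂ q₂ y) bop = bern (rrParam p₄ q₄ (x && y))) :
    False := by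
  have e1 : p₁ = 1/2 :=
    or_half_aux p₁ q₁ p₂ q₂ p₃ q₃ hp₁ hq₁ hp₂ hq₂ hp₃ hq₃ hne₁ hne₂ hne₃ op hor
  -- the and-merge is an or-merge after negating all inputs/outputs
  have hand' : ∀ x y : Bool,
      indepOp (rrParam q₁ p₁ x) (rrParam q₂ p₂ y) bop = bern (rrParam q₄ p₄ (x || y)) := by
    intro x y
    have h := hand (!x) (!y)
    cases x <;> cases y <;> simpa [rrParam] using h
  have e2 : q₁ = 1/2 :=
    or_half_aux q₁ p₁ q₂ p₂ q₄ p₄ hq₁ hp₁ hq₂ hp₂ hq₄ hp₄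
      (Ne.symm hne₁) (Ne.symm hne₂) (Ne.symm hne₄) bop hand'
  exact hne₁ (e1.trans e2.symm)
end

section
/- Let ε₁, ε₂ > 0 and p_i = e^{ε_i}/(e^{ε_i}+1). For independent X ~ Bernoulli(p₁) and Y ~ Bernoulli(p₂), Pr(X ⊕ Y = 1 when the xor of the noiseless bits is 1) equals p* = e^{ε*}/(e^{ε*}+1) where ε* = log((1 + e^{ε₁+ε₂})/(e^{ε₁} + e^{ε₂})). Concretely: p₁p₂ + (1−p₁)(1−p₂) = e^{ε*}/(e^{ε*}+1) and p₁(1−p₂) + p₂(1−p₁) = 1/(e^{ε*}+1). -/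
open Real

theorem stmt8 (ε₁ ε₂ : ℝ) (h₁ : 0 < ε₁) (h₂ : 0 < ε₂) :
    (Real.exp ε₁ / (Real.exp ε₁ + 1)) * (Real.exp ε₂ / (Real.exp ε₂ + 1)) +
        (1 - Real.exp ε₁ / (Real.exp ε₁ + 1)) * (1 - Real.exp ε₂ / (Real.exp ε₂ + 1)) =
      Real.exp (Real.log ((1 + Real.exp (ε₁ + ε₂)) / (Real.exp ε₁ + Real.exp ε₂))) /
        (Real.exp (Real.log ((1 + Real.exp (ε₁ + ε₂)) / (Real.exp ε₁ + Real.exp ε₂))) + 1) ∧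
    (Real.exp ε₁ / (Real.exp ε₁ + 1)) * (1 - Real.exp ε₂ / (Real.exp ε₂ + 1)) +
        (Real.exp ε₂ / (Real.exp ε₂ + 1)) * (1 - Real.exp ε₁ / (Real.exp ε₁ + 1)) =
      1 / (Real.exp (Real.log ((1 + Real.exp (ε₁ + ε₂)) / (Real.exp ε₁ + Real.exp ε₂))) + 1) ∧
    0 < Real.log ((1 + Real.exp (ε₁ + ε₂)) / (Real.exp ε₁ + Real.exp ε₂)) := by
  set a := Real.exp ε₁ with ha
  set b := Real.exp ε₂ with hb
  have ha1 : 1 < a := by simpa [ha] using Real.exp_lt_exp.mpr h₁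
  have hb1 : 1 < b := by simpa [hb] using Real.exp_lt_exp.mpr h₂
  have hab : Real.exp (ε₁ + ε₂) = a * b := by rw [Real.exp_add]
  have hapos : (0:ℝ) < a := lt_trans one_pos ha1
  have hbpos : (0:ℝ) < b := lt_trans one_pos hb1
  have hden : (0:ℝ) < a + b := by linarith
  have hnum : (0:ℝ) < 1 + a * b := by positivity
  have hratio : (0:ℝ) < (1 + a * b) / (a + b) := div_pos hnum hden
  have hexp : Real.exp (Real.log ((1 + Real.exp (ε₁ + ε₂)) / (a + b))) = (1 + a * b) / (a + b) := by
    rw [hab, Real.exp_log hratio]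
  have h1 : a + b < 1 + a * b := by nlinarith
  refine ⟨?_, ?_, ?_⟩
  · rw [hexp]
    have h0 : a + 1 ≠ 0 := by positivity
    have h0' : b + 1 ≠ 0 := by positivity
    field_simp
    ring
  · rw [hexp]
    have h0 : a + 1 ≠ 0 := by positivity
    have h0' : b + 1 ≠ 0 := by positivity
    field_simp
    ring
  · rw [hab]
    exact Real.log_pos ((one_lt_div hden).mpr h1)
end

section
/- Let p, q with 0 < q < p < 1 and γ ∈ (0,1). Define φ(m) = γ^m log(γ) · ((1 − a_n)/(1 − a_m) − a_n/a_m) where a_m = p − (p−q)γ^m for real m > 0 and fixed n > 0. Then φ(n) = 0, φ(m) > 0 for 0 < m < n, and φ(m) < 0 for m > n. -/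
open Real

theorem stmt19 (p q γ n : ℝ) (hq0 : 0 < q) (hqp : q < p) (hp1 : p < 1)
    (hγ0 : 0 < γ) (hγ1 : γ < 1) (hn : 0 < n) :
    let a : ℝ → ℝ := fun m => p - (p - q) * γ ^ m
    let φ : ℝ → ℝ := fun m =>
      γ ^ m * Real.log γ * ((1 - a n) / (1 - a m) - a n / a m)
    φ n = 0 ∧ (∀ m : ℝ, 0 < m → m < n → 0 < φ m) ∧ (∀ m : ℝ, n < m → φ m < 0) := by
  intro a φ
  have hpq : (0:ℝ) < p - q := by linarith
  have key : ∀ m : ℝ, 0 < m → q < a m ∧ a m < p := by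
    intro m hm
    have h1 : (0:ℝ) < γ ^ m := Real.rpow_pos_of_pos hγ0 m
    have h2 : γ ^ m < 1 := Real.rpow_lt_one hγ0.le hγ1 hm
    constructor <;> simp only [a] <;> nlinarith
  obtain ⟨hanq, hanp⟩ := key n hn
  have hlog : Real.log γ < 0 := Real.log_neg hγ0 hγ1
  have han0 : a n ≠ 0 := by linarith
  have han1 : (1 : ℝ) - a n ≠ 0 := by intro h; linarith [hanp, hp1]
  refine ⟨?_, ?_, ?_⟩
  · show γ ^ n * Real.log γ * ((1 - a n) / (1 - a n) - a n / a n) = 0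
    rw [div_self han1, div_self han0, sub_self, mul_zero]
  · intro m hm hmn
    obtain ⟨hamq, hamp⟩ := key m hm
    have hlt : a m < a n := by
      have : γ ^ n < γ ^ m := Real.rpow_lt_rpow_of_exponent_gt hγ0 hγ1 hmn
      simp only [a]; nlinarith
    have h1 : (1 - a n) / (1 - a m) < 1 := by
      rw [div_lt_one (by linarith : (0:ℝ) < 1 - a m)]; linarith
    have h2 : (1 : ℝ) < a n / a m := by
      rw [lt_div_iff₀ (by linarith : (0:ℝ) < a m)]; linarith
    have hbr : (1 - a n) / (1 - a m) - a n / a m < 0 := by linarith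
    have hγm : (0:ℝ) < γ ^ m := Real.rpow_pos_of_pos hγ0 m
    show 0 < γ ^ m * Real.log γ * ((1 - a n) / (1 - a m) - a n / a m)
    have := mul_neg_of_pos_of_neg hγm hlog
    nlinarith
  · intro m hmn
    have hm : 0 < m := hn.trans hmn
    obtain ⟨hamq, hamp⟩ := key m hm
    have hlt : a n < a m := by
      have : γ ^ m < γ ^ n := Real.rpow_lt_rpow_of_exponent_gt hγ0 hγ1 hmn
      simp only [a]; nlinarith
    have h1 : (1:ℝ) < (1 - a n) / (1 - a m) := by
      rw [lt_div_iff₀ (by linarith : (0:ℝ) < 1 - a m)]; linarith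
    have h2 : a n / a m < 1 := by
      rw [div_lt_one (by linarith : (0:ℝ) < a m)]; linarith
    have hbr : 0 < (1 - a n) / (1 - a m) - a n / a m := by linarith
    have hγm : (0:ℝ) < γ ^ m := Real.rpow_pos_of_pos hγ0 m
    show γ ^ m * Real.log γ * ((1 - a n) / (1 - a m) - a n / a m) < 0
    have := mul_neg_of_pos_of_neg hγm hlog
    nlinarith
end
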